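/- For any p ∈ [0,1], define F(p) = −p·log₂ p − (1−p)·log₂(1−p) − 4p(1−p) (with 0·log₂ 0 := 0). Then F(p) ≥ 0 for all p ∈ [0,1], with equality if and only if p ∈ {0, 1/2, 1}. -/

import Mathlib

/-- `F(p) = −p log₂ p − (1−p) log₂(1−p) − 4p(1−p)` (with `0 log₂ 0 = 0`,
as `Real.logb 2 0 = 0`). -/
noncomputable def Fpol (p : ℝ) : ℝ :=
  -p * Real.logb 2 p - (1 - p) * Real.logb 2 (1 - p) - 4 * p * (1 - p)

open Real

noncomputable def hfun (t : ℝ) : ℝ :=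
  2 * Real.log 2 * t ^ 2 - (1 + t) * Real.log (1 + t) - (1 - t) * Real.log (1 - t)

noncomputable def hfun' (t : ℝ) : ℝ :=
  4 * Real.log 2 * t - Real.log (1 + t) + Real.log (1 - t)

noncomputable def hfun'' (t : ℝ) : ℝ :=
  4 * Real.log 2 - 1 / (1 + t) - 1 / (1 - t)

lemma hasDerivAt_hfun {t : ℝ} (h1 : -1 < t) (h2 : t < 1) :
    HasDerivAt hfun (hfun' t) t := by
  have hp : (0:ℝ) < 1 + t := by linarith
  have hm : (0:ℝ) < 1 - t := by linarith
  have d1 : HasDerivAt (fun t : ℝ => 2 * Real.log 2 * t ^ 2) (4 * Real.log 2 * t) t := by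
    have := (hasDerivAt_pow 2 t).const_mul (2 * Real.log 2)
    simpa using this.congr_deriv (by ring)
  have d2 : HasDerivAt (fun t : ℝ => (1 + t) * Real.log (1 + t))
      (Real.log (1 + t) + 1) t := by
    have ha : HasDerivAt (fun t : ℝ => 1 + t) 1 t := by
      simpa using (hasDerivAt_id t).const_add 1
    have hl : HasDerivAt (fun t : ℝ => Real.log (1 + t)) (1 / (1 + t)) t := by
      simpa [Function.comp_def] using (Real.hasDerivAt_log hp.ne').comp t ha
    exact (ha.mul hl).congr_deriv (by field_simp)
  have d3 : HasDerivAt (fun t : ℝ => (1 - t) * Real.log (1 - t))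
      (-(Real.log (1 - t) + 1)) t := by
    have ha : HasDerivAt (fun t : ℝ => 1 - t) (-1) t := by
      simpa using (hasDerivAt_id t).const_sub 1
    have hl : HasDerivAt (fun t : ℝ => Real.log (1 - t)) (-1 / (1 - t)) t := by
      have := (Real.hasDerivAt_log hm.ne').comp t ha
      simpa [Function.comp_def] using this.congr_deriv (by field_simp)
    have := ha.mul hl
    exact this.congr_deriv (by field_simp; ring)
  have := (d1.sub d2).sub d3
  exact this.congr_deriv (by unfold hfun'; ring)

lemma hasDerivAt_hfun' {t : ℝ} (h1 : -1 < t) (h2 : t < 1) :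
    HasDerivAt hfun' (hfun'' t) t := by
  have hp : (0:ℝ) < 1 + t := by linarith
  have hm : (0:ℝ) < 1 - t := by linarith
  have d1 : HasDerivAt (fun t : ℝ => 4 * Real.log 2 * t) (4 * Real.log 2) t := by
    simpa using (hasDerivAt_id t).const_mul (4 * Real.log 2)
  have d2 : HasDerivAt (fun t : ℝ => Real.log (1 + t)) (1 / (1 + t)) t := by
    have ha : HasDerivAt (fun t : ℝ => 1 + t) 1 t := by
      simpa using (hasDerivAt_id t).const_add 1
    simpa [Function.comp_def] using (Real.hasDerivAt_log hp.ne').comp t ha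
  have d3 : HasDerivAt (fun t : ℝ => Real.log (1 - t)) (-1 / (1 - t)) t := by
    have ha : HasDerivAt (fun t : ℝ => 1 - t) (-1) t := by
      simpa using (hasDerivAt_id t).const_sub 1
    have := (Real.hasDerivAt_log hm.ne').comp t ha
    exact this.congr_deriv (by field_simp)
  have := (d1.sub d2).add d3
  exact this.congr_deriv (by unfold hfun''; ring)

lemma continuous_hfun : Continuous hfun := by
  unfold hfun
  have h1 : Continuous fun t : ℝ => (1 + t) * Real.log (1 + t) :=
    Real.continuous_mul_log.comp (by continuity)
  have h2 : Continuous fun t : ℝ => (1 - t) * Real.log (1 - t) :=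
    Real.continuous_mul_log.comp (by continuity)
  continuity

lemma log2_gt : (0.6931471803 : ℝ) < Real.log 2 := Real.log_two_gt_d9

lemma hfun_pos {t : ℝ} (ht0 : 0 < t) (ht1 : t < 1) : 0 < hfun t := by
  set L := Real.log 2 with hLdef
  have hL : (0.6931471803 : ℝ) < L := log2_gt
  set t0 : ℝ := Real.sqrt (1 - 1 / (2 * L)) with ht0def
  have h2L : (0:ℝ) < 2 * L := by nlinarith
  have hfrac : 1 / (2 * L) < 1 := by rw [div_lt_one h2L]; nlinarith
  have hfracpos : 0 < 1 / (2 * L) := div_pos one_pos h2L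
  have hsq : t0 ^ 2 = 1 - 1 / (2 * L) := by
    rw [ht0def, sq, Real.mul_self_sqrt (by linarith)]
  have ht0pos : 0 < t0 := by
    rw [ht0def]; exact Real.sqrt_pos.2 (by linarith)
  have ht0lt1 : t0 < 1 := by nlinarith [hsq, ht0pos, hfracpos]
  clear_value t0
  clear_value L
  -- h'' positive on Ioo 0 t0
  have hpp : ∀ x ∈ Set.Ioo (0:ℝ) t0, 0 < hfun'' x := by
    intro x hx
    have hx2 : x ^ 2 < t0 ^ 2 := by nlinarith [hx.1, hx.2]
    have h1 : (0:ℝ) < 1 + x := by nlinarith [hx.1]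
    have h2 : (0:ℝ) < 1 - x := by nlinarith [hx.2, ht0lt1]
    unfold hfun''
    rw [hsq] at hx2
    have key : 1 < (1 - x ^ 2) * (2 * L) := by
      have := (div_lt_iff₀ h2L).1 (by nlinarith : 1 / (2 * L) < 1 - x ^ 2)
      linarith
    have hs : 1 / (1 + x) + 1 / (1 - x) = 2 / ((1 + x) * (1 - x)) := by
      field_simp; norm_num
    have h4 : 2 / ((1 + x) * (1 - x)) < 4 * L := by
      rw [div_lt_iff₀ (mul_pos h1 h2)]
      nlinarith
    linarith [hs, h4]
  -- hfun' strictly monotone on Icc 0 t0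
  have hmono' : StrictMonoOn hfun' (Set.Icc 0 t0) := by
    apply strictMonoOn_of_deriv_pos (convex_Icc _ _)
    · intro x hx
      exact (hasDerivAt_hfun' (by linarith [hx.1]) (by
        linarith [hx.2])).continuousAt.continuousWithinAt
    · intro x hx
      rw [interior_Icc] at hx
      rw [(hasDerivAt_hfun' (by linarith [hx.1]) (by linarith [hx.2, ht0lt1])).deriv]
      exact hpp x hx
  have h'0 : hfun' 0 = 0 := by unfold hfun'; simp
  have h'pos : ∀ x ∈ Set.Ioc (0:ℝ) t0, 0 < hfun' x := by
    intro x hx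
    have := hmono' (Set.mem_Icc.2 ⟨le_refl 0, ht0pos.le⟩)
      (Set.mem_Icc.2 ⟨hx.1.le, hx.2⟩) hx.1
    rwa [h'0] at this
  have hmono : StrictMonoOn hfun (Set.Icc 0 t0) := by
    apply strictMonoOn_of_deriv_pos (convex_Icc _ _) continuous_hfun.continuousOn
    intro x hx
    rw [interior_Icc] at hx
    rw [(hasDerivAt_hfun (by linarith [hx.1]) (by linarith [hx.2, ht0lt1])).deriv]
    exact h'pos x ⟨hx.1, hx.2.le⟩
  have h0 : hfun 0 = 0 := by unfold hfun; simp
  have hposIoc : ∀ x ∈ Set.Ioc (0:ℝ) t0, 0 < hfun x := by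
    intro x hx
    have := hmono (Set.mem_Icc.2 ⟨le_refl 0, ht0pos.le⟩)
      (Set.mem_Icc.2 ⟨hx.1.le, hx.2⟩) hx.1
    rwa [h0] at this
  have hconc : StrictConcaveOn ℝ (Set.Icc t0 1) hfun := by
    apply strictConcaveOn_of_deriv2_neg (convex_Icc _ _) continuous_hfun.continuousOn
    intro x hx
    rw [interior_Icc] at hx
    have hx1 : -1 < x := by linarith [hx.1, ht0pos]
    have hx2 : x < 1 := hx.2
    have e1 : deriv (deriv hfun) x = hfun'' x := by
      have hev : deriv hfun =ᶠ[nhds x] hfun' := by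
        filter_upwards [Ioo_mem_nhds hx1 hx2] with y hy
        exact (hasDerivAt_hfun hy.1 hy.2).deriv
      rw [Filter.EventuallyEq.deriv_eq hev, (hasDerivAt_hfun' hx1 hx2).deriv]
    show deriv (deriv hfun) x < 0
    rw [e1]
    unfold hfun''
    have hxp : (0:ℝ) < 1 + x := by linarith
    have hxm : (0:ℝ) < 1 - x := by linarith
    have hx2' : 1 - 1 / (2 * L) < x ^ 2 := by
      rw [← hsq]; nlinarith [hx.1, ht0pos]
    have key : (1 - x ^ 2) * (2 * L) < 1 := by
      have := (lt_div_iff₀ h2L).1 (by nlinarith : (1 - x ^ 2 : ℝ) < 1 / (2 * L))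
      linarith
    have hs : 1 / (1 + x) + 1 / (1 - x) = 2 / ((1 + x) * (1 - x)) := by
      field_simp; norm_num
    have h4 : 4 * L < 2 / ((1 + x) * (1 - x)) := by
      rw [lt_div_iff₀ (mul_pos hxp hxm)]
      nlinarith
    linarith [hs, h4]
  rcases le_or_gt t t0 with hle | hgt
  · exact hposIoc t ⟨ht0, hle⟩
  · have h1v : hfun 1 = 0 := by unfold hfun; norm_num
    have ht0v : 0 < hfun t0 := hposIoc t0 ⟨ht0pos, le_refl _⟩
    have ha : (0:ℝ) < (1 - t) / (1 - t0) := div_pos (by linarith) (by linarith)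
    have hb : (0:ℝ) < (t - t0) / (1 - t0) := div_pos (by linarith) (by linarith)
    have hne : (1:ℝ) - t0 ≠ 0 := by linarith
    have hab : (1 - t) / (1 - t0) + (t - t0) / (1 - t0) = 1 := by
      rw [← add_div, show (1 - t) + (t - t0) = 1 - t0 by ring, div_self hne]
    have hcomb := hconc.2 (Set.mem_Icc.2 ⟨le_refl t0, ht0lt1.le⟩)
      (Set.mem_Icc.2 ⟨ht0lt1.le, le_refl 1⟩) (ne_of_lt ht0lt1) ha hb hab
    simp only [smul_eq_mul] at hcomb
    have harg : (1 - t) / (1 - t0) * t0 + (t - t0) / (1 - t0) * (1:ℝ) = t := by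
      field_simp
      ring
    rw [harg] at hcomb
    simp only [h1v, mul_zero, add_zero] at hcomb
    linarith [mul_pos ha ht0v]

lemma hfun_even (t : ℝ) : hfun (-t) = hfun t := by
  unfold hfun
  rw [show (1:ℝ) + -t = 1 - t by ring, show (1:ℝ) - -t = 1 + t by ring]
  ring

lemma Fpol_eq {p : ℝ} (h0 : 0 < p) (h1 : p < 1) :
    Fpol p = hfun (1 - 2 * p) / (2 * Real.log 2) := by
  have hl2 : Real.log 2 ≠ 0 := (Real.log_pos (by norm_num)).ne'
  unfold Fpol hfun
  rw [Real.logb, Real.logb]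
  rw [show (1 + (1 - 2 * p)) = 2 * (1 - p) by ring,
    show (1 - (1 - 2 * p)) = 2 * p by ring,
    Real.log_mul two_ne_zero (by linarith : (1:ℝ) - p ≠ 0),
    Real.log_mul two_ne_zero h0.ne']
  field_simp
  ring

/-- `F(p) ≥ 0` on `[0,1]`, with equality iff `p ∈ {0, 1/2, 1}`
(i.e. `Z(X)² ≤ H(X)` for `X ~ Ber(p)`). -/
theorem stmt6 (p : ℝ) (hp : p ∈ Set.Icc (0 : ℝ) 1) :
    0 ≤ Fpol p ∧ (Fpol p = 0 ↔ p = 0 ∨ p = 1 / 2 ∨ p = 1) := by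
  obtain ⟨hp0, hp1⟩ := hp
  have F0 : Fpol 0 = 0 := by unfold Fpol; simp
  have F1 : Fpol 1 = 0 := by unfold Fpol; simp
  have Fh : Fpol (1 / 2) = 0 := by
    have hlb : Real.logb 2 (1 / 2) = -1 := by
      rw [show (1:ℝ) / 2 = 2⁻¹ by norm_num, Real.logb_inv,
        Real.logb_self_eq_one (by norm_num)]
    unfold Fpol
    rw [show (1:ℝ) - 1 / 2 = 1 / 2 by norm_num, hlb]
    ring
  by_cases hcase : p = 0 ∨ p = 1 / 2 ∨ p = 1
  · refine ⟨?_, fun _ => hcase, fun _ => ?_⟩ <;>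
      rcases hcase with h | h | h <;> subst h <;> norm_num [F0, F1, Fh]
  · push_neg at hcase
    obtain ⟨hne0, hneh, hne1⟩ := hcase
    have h0 : 0 < p := lt_of_le_of_ne hp0 (Ne.symm hne0)
    have h1 : p < 1 := lt_of_le_of_ne hp1 hne1
    set t := 1 - 2 * p with htdef
    have htne : t ≠ 0 := by
      intro h
      apply hneh
      have : p = 1 / 2 := by rw [htdef] at h; linarith
      exact this
    have ht1 : t < 1 := by rw [htdef]; linarith
    have htm1 : -1 < t := by rw [htdef]; linarith
    have hpos : 0 < hfun t := by
      rcases lt_or_gt_of_ne htne with h | h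
      · rw [← hfun_even]
        exact hfun_pos (by linarith) (by linarith)
      · exact hfun_pos h ht1
    have hF : 0 < Fpol p := by
      rw [Fpol_eq h0 h1, ← htdef]
      exact div_pos hpos (by positivity)
    refine ⟨hF.le, fun heq => absurd heq hF.ne', fun hc => ?_⟩
    rcases hc with h | h | h
    · exact absurd h hne0
    · exact absurd h hneh
    · exact absurd h hne1
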